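/- Let G be a (2P_2, \overline{P_2+P_3})-free atom containing an induced 5-cycle on vertices v_1,…,v_5. Then for every i ∈ {1,…,5} (indices modulo 5), every vertex of V_{{i,i+2}} is adjacent to every vertex of V_{{i-1,i+1}} ∪ V_{{i+1,i+3}}. -/

import Mathlib

open SimpleGraph

/-- The graph `2P₂`: two disjoint edges, on vertex set `Fin 4`. -/
def twoP2 : SimpleGraph (Fin 4) :=
  SimpleGraph.fromRel (fun a b => (a = 0 ∧ b = 1) ∨ (a = 2 ∧ b = 3))

/-- The graph `P₂ + P₃`: disjoint union of a path on 2 vertices (0-1)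
and a path on 3 vertices (2-3-4), on vertex set `Fin 5`. -/
def P2P3 : SimpleGraph (Fin 5) :=
  SimpleGraph.fromRel (fun a b => (a = 0 ∧ b = 1) ∨ (a = 2 ∧ b = 3) ∨ (a = 3 ∧ b = 4))

/-- `G` is `H`-free: `G` contains no induced subgraph isomorphic to `H`. -/
def Free {W V : Type*} (H : SimpleGraph W) (G : SimpleGraph V) : Prop :=
  IsEmpty (H ↪g G)

/-- `G` has no clique cut-set: for every clique `K`, deleting the vertices of `K`
does not disconnect the graph.  A graph with this property is called an atom. -/
def NoCliqueCutset {V : Type*} (G : SimpleGraph V) : Prop :=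
  ∀ K : Set V, G.IsClique K → (G.induce (Kᶜ : Set V)).Preconnected

/-- For `S ⊆ Fin 5`, the set of vertices `x` outside the cycle `v 0, …, v 4` whose
neighbourhood on the cycle is exactly `{v i : i ∈ S}`. -/
def vSet {V : Type*} (G : SimpleGraph V) (v : Fin 5 → V) (S : Set (Fin 5)) : Set V :=
  {x | (∀ i, x ≠ v i) ∧ ∀ i, (G.Adj x (v i) ↔ i ∈ S)}

/-- Auxiliary: four vertices forming an induced `2P₂` give an embedding of `twoP2`. -/
lemma exists2P2 {V : Type*} (G : SimpleGraph V) (a b c d : V)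
    (hab : G.Adj a b) (hcd : G.Adj c d)
    (hac : ¬G.Adj a c) (had : ¬G.Adj a d) (hbc : ¬G.Adj b c) (hbd : ¬G.Adj b d)
    (nac : a ≠ c) (nad : a ≠ d) (nbc : b ≠ c) (nbd : b ≠ d) :
    Nonempty (twoP2 ↪g G) := by
  have hca : ¬G.Adj c a := fun h => hac h.symm
  have hda : ¬G.Adj d a := fun h => had h.symm
  have hcb : ¬G.Adj c b := fun h => hbc h.symm
  have hdb : ¬G.Adj d b := fun h => hbd h.symm
  refine ⟨⟨⟨![a,b,c,d], ?_⟩, ?_⟩⟩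
  · intro i j h
    fin_cases i <;> fin_cases j <;>
      simp_all [hab.ne, hab.ne', hcd.ne, hcd.ne', nac, nad, nbc, nbd,
        nac.symm, nad.symm, nbc.symm, nbd.symm]
  · intro i j
    change G.Adj (![a,b,c,d] i) (![a,b,c,d] j) ↔ twoP2.Adj i j
    fin_cases i <;> fin_cases j <;>
      simp [twoP2, SimpleGraph.fromRel_adj, hab, hcd, hab.symm, hcd.symm,
        hac, had, hbc, hbd, hca, hda, hcb, hdb, G.irrefl, Function.Embedding.coeFn_mk]

theorem clm_C5_V13_V24_complete {V : Type*} [Fintype V] (G : SimpleGraph V)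
    (hfree1 : _root_.Free twoP2 G) (hfree2 : _root_.Free (P2P3ᶜ) G)
    (hatom : NoCliqueCutset G)
    (v : Fin 5 → V) (hv : Function.Injective v)
    (hC : ∀ i j : Fin 5, G.Adj (v i) (v j) ↔ (j = i + 1 ∨ i = j + 1)) :
    ∀ i : Fin 5, ∀ x ∈ vSet G v {i, i + 2},
      ∀ y ∈ vSet G v {i - 1, i + 1} ∪ vSet G v {i + 1, i + 3}, G.Adj x y := by
  intro i x hx y hy
  obtain ⟨hxv, hxa⟩ := hx
  by_contra hxy
  rcases hy with hy | hy
  · -- y ∈ V_{i-1, i+1}; {x, v(i+2), y, v(i-1)} induces a 2P₂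
    obtain ⟨hyv, hya⟩ := hy
    have h1 : G.Adj x (v (i + 2)) := (hxa (i + 2)).2 (by simp)
    have h2 : G.Adj y (v (i - 1)) := (hya (i - 1)).2 (by simp)
    have nxvi1 : ¬G.Adj x (v (i - 1)) := by
      rw [hxa]
      have : i - 1 ≠ i ∧ i - 1 ≠ i + 2 := by omega
      simp [this.1, this.2]
    have nyi2 : ¬G.Adj y (v (i + 2)) := by
      rw [hya]
      have : i + 2 ≠ i - 1 ∧ i + 2 ≠ i + 1 := by omega
      simp [this.1, this.2]
    have nvv : ¬G.Adj (v (i + 2)) (v (i - 1)) := by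
      rw [hC]
      have : i - 1 ≠ i + 2 + 1 ∧ i + 2 ≠ i - 1 + 1 := by omega
      simp [this.1, this.2]
    have hxy' : x ≠ y := by
      intro h
      have hxi : G.Adj x (v i) := (hxa i).2 (by simp)
      have : ¬G.Adj y (v i) := by
        rw [hya]
        have : i ≠ i - 1 ∧ i ≠ i + 1 := by omega
        simp [this.1, this.2]
      exact this (h ▸ hxi)
    obtain ⟨e⟩ := exists2P2 G x (v (i + 2)) y (v (i - 1)) h1 h2 hxy nxvi1
      (fun h => nyi2 h.symm) nvv hxy' (hxv (i - 1)) (Ne.symm (hyv (i + 2)))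
      (hv.ne (show i + 2 ≠ i - 1 by omega))
    exact hfree1.false e
  · -- y ∈ V_{i+1, i+3}; {x, v i, y, v(i+3)} induces a 2P₂
    obtain ⟨hyv, hya⟩ := hy
    have h1 : G.Adj x (v i) := (hxa i).2 (by simp)
    have h2 : G.Adj y (v (i + 3)) := (hya (i + 3)).2 (by simp)
    have nxvi3 : ¬G.Adj x (v (i + 3)) := by
      rw [hxa]
      have : i + 3 ≠ i ∧ i + 3 ≠ i + 2 := by omega
      simp [this.1, this.2]
    have nyi : ¬G.Adj y (v i) := by
      rw [hya]
      have : i ≠ i + 1 ∧ i ≠ i + 3 := by omega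
      simp [this.1, this.2]
    have nvv : ¬G.Adj (v i) (v (i + 3)) := by
      rw [hC]
      have : i + 3 ≠ i + 1 ∧ i ≠ i + 3 + 1 := by omega
      simp [this.1, this.2]
    have hxy' : x ≠ y := fun h => nyi (h ▸ h1)
    obtain ⟨e⟩ := exists2P2 G x (v i) y (v (i + 3)) h1 h2 hxy nxvi3
      (fun h => nyi h.symm) nvv hxy' (hxv (i + 3)) (Ne.symm (hyv i))
      (hv.ne (show i ≠ i + 3 by omega))
    exact hfree1.false e
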